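/- Let p, d, d₀, L be positive integers with d₀ ≤ p. Let A₀ ∈ 𝒜_{p×d₀}. On a probability space let P₁, …, P_L be independent and identically distributed random real p×d matrices such that almost surely Pℓᵀ Pℓ = I_d for every ℓ ∈ {1, …, L}. Set Π^∞ := 𝔼[P₁ P₁ᵀ] (entrywise expectation) and Π̂ := (1/L) Σ_{ℓ=1}^L Pℓ Pℓᵀ. Let Â^L be a random p×d₀ matrix, chosen measurably, whose columns are, for each outcome, orthonormal eigenvectors of the symmetric matrix Π̂ corresponding to its d₀ largest eigenvalues (counted with multiplicity). Then 𝔼[ d_F(𝒮(Â^L), 𝒮(A₀)) ] ≤ 2 d₀^{1/2} ‖Π^∞ − A₀A₀ᵀ‖_op + 2 d₀^{1/2} (2π)^{1/2} p / L^{1/2}. -/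

import Mathlib

open Matrix MeasureTheory ProbabilityTheory
open scoped MeasureTheory ProbabilityTheory

/-- Matrices over `ℝ` carry the product (entrywise Borel) σ-algebra. -/
instance matrixMeasurableSpace {m n : ℕ} : MeasurableSpace (Matrix (Fin m) (Fin n) ℝ) :=
  (inferInstance : MeasurableSpace (Fin m → Fin n → ℝ))

/-- Squared Frobenius norm of a real matrix. -/
noncomputable def frobSq {m n : ℕ} (M : Matrix (Fin m) (Fin n) ℝ) : ℝ :=
  ∑ i, ∑ j, (M i j) ^ 2

/-- The distance `d_F(𝒮(Â), 𝒮(A))`, defined by `d_F² = (1/2) ‖Â Âᵀ − A Aᵀ‖_F²`. -/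
noncomputable def dF {p d dhat : ℕ} (Ahat : Matrix (Fin p) (Fin dhat) ℝ)
    (A : Matrix (Fin p) (Fin d) ℝ) : ℝ :=
  Real.sqrt ((1 / 2) * frobSq (Ahat * Ahatᵀ - A * Aᵀ))

/-- The ℓ²→ℓ² operator norm (spectral norm) of a real square matrix. -/
noncomputable def opNorm {p : ℕ} (M : Matrix (Fin p) (Fin p) ℝ) : ℝ :=
  ‖LinearMap.toContinuousLinearMap (Matrix.toEuclideanLin M)‖

namespace Stmt0Aux
variable {p : ℕ}

lemma euc_norm_eq (w : Fin p → ℝ) :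
    ‖(WithLp.equiv 2 (Fin p → ℝ)).symm w‖ = Real.sqrt (∑ i, (w i)^2) := by
  rw [EuclideanSpace.norm_eq]; simp [sq_abs]

lemma opNorm_nonneg (M : Matrix (Fin p) (Fin p) ℝ) : 0 ≤ opNorm M := norm_nonneg _

lemma sqrt_mulVec_le (M : Matrix (Fin p) (Fin p) ℝ) (v : Fin p → ℝ) :
    Real.sqrt (∑ i, (M.mulVec v i)^2) ≤ opNorm M * Real.sqrt (∑ i, (v i)^2) := by
  have h := (LinearMap.toContinuousLinearMap (Matrix.toEuclideanLin M)).le_opNorm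
    ((WithLp.equiv 2 (Fin p → ℝ)).symm v)
  rw [LinearMap.coe_toContinuousLinearMap'] at h
  change ‖(WithLp.equiv 2 (Fin p → ℝ)).symm (M *ᵥ v)‖ ≤ _ at h
  rw [euc_norm_eq, euc_norm_eq] at h
  exact h

lemma sq_mulVec_le (M : Matrix (Fin p) (Fin p) ℝ) (v : Fin p → ℝ) :
    ∑ i, (M.mulVec v i)^2 ≤ opNorm M ^ 2 * ∑ i, (v i)^2 := by
  have h := sqrt_mulVec_le M v
  have h1 : (0:ℝ) ≤ ∑ i, (M.mulVec v i)^2 := by positivity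
  have h2 : (0:ℝ) ≤ ∑ i, (v i)^2 := by positivity
  nlinarith [Real.sq_sqrt h1, Real.sq_sqrt h2, Real.sqrt_nonneg (∑ i, (M.mulVec v i)^2),
    Real.sqrt_nonneg (∑ i, (v i)^2), opNorm_nonneg M]

lemma opNorm_le_bound (M : Matrix (Fin p) (Fin p) ℝ) {C : ℝ} (hC : 0 ≤ C)
    (h : ∀ v : Fin p → ℝ, Real.sqrt (∑ i, (M.mulVec v i)^2) ≤ C * Real.sqrt (∑ i, (v i)^2)) :
    opNorm M ≤ C := by
  apply ContinuousLinearMap.opNorm_le_bound _ hC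
  intro x
  have := h ((WithLp.equiv 2 (Fin p → ℝ)) x)
  rw [← euc_norm_eq, ← euc_norm_eq] at this
  simpa [LinearMap.coe_toContinuousLinearMap', Matrix.toEuclideanLin_apply] using this

lemma opNorm_le_sqrt_frobSq (M : Matrix (Fin p) (Fin p) ℝ) :
    opNorm M ≤ Real.sqrt (frobSq M) := by
  apply opNorm_le_bound _ (Real.sqrt_nonneg _)
  intro v
  rw [← Real.sqrt_mul (by unfold frobSq; positivity)]
  apply Real.sqrt_le_sqrt
  rw [frobSq, Finset.sum_mul]
  apply Finset.sum_le_sum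
  intro i _
  calc (M.mulVec v i)^2 = (∑ j, M i j * v j)^2 := by rfl
  _ ≤ (∑ j, (M i j)^2) * ∑ j, (v j)^2 := Finset.sum_mul_sq_le_sq_mul_sq _ _ _

lemma opNorm_add_le (A B : Matrix (Fin p) (Fin p) ℝ) :
    opNorm (A + B) ≤ opNorm A + opNorm B := by
  unfold opNorm; rw [map_add, map_add]; exact norm_add_le _ _

lemma opNorm_neg (A : Matrix (Fin p) (Fin p) ℝ) : opNorm (-A) = opNorm A := by
  unfold opNorm; rw [map_neg, map_neg, norm_neg]

lemma opNorm_sub_le (A B C : Matrix (Fin p) (Fin p) ℝ) :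
    opNorm (A - C) ≤ opNorm (A - B) + opNorm (B - C) := by
  have := opNorm_add_le (A - B) (B - C)
  rwa [sub_add_sub_cancel] at this

lemma sqrt_sum_sq_add_le (x y : Fin p → ℝ) :
    Real.sqrt (∑ i, (x i + y i)^2)
      ≤ Real.sqrt (∑ i, (x i)^2) + Real.sqrt (∑ i, (y i)^2) := by
  have h := norm_add_le ((WithLp.equiv 2 (Fin p → ℝ)).symm x) ((WithLp.equiv 2 (Fin p → ℝ)).symm y)
  have e : (WithLp.equiv 2 (Fin p → ℝ)).symm x + (WithLp.equiv 2 (Fin p → ℝ)).symm y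
      = (WithLp.equiv 2 (Fin p → ℝ)).symm (fun i => x i + y i) := rfl
  rw [e, euc_norm_eq, euc_norm_eq, euc_norm_eq] at h
  exact h

lemma orth_dot {M : Matrix (Fin p) (Fin p) ℝ} (hM : Mᵀ * M = 1) (x y : Fin p → ℝ) :
    (M *ᵥ x) ⬝ᵥ (M *ᵥ y) = x ⬝ᵥ y := by
  rw [Matrix.dotProduct_mulVec, ← Matrix.mulVec_transpose, Matrix.mulVec_mulVec, hM,
    Matrix.one_mulVec]

lemma sum_castLE {n : ℕ} (h : n ≤ p) (F : Fin p → ℝ) :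
    ∑ i : Fin p, (if (i:ℕ) < n then F i else 0) = ∑ j : Fin n, F (Fin.castLE h j) := by
  have key : ∀ i : Fin p, (if (i:ℕ) < n then F i else 0)
      = ∑ j : Fin n, if i = Fin.castLE h j then F i else 0 := by
    intro i
    by_cases hi : (i:ℕ) < n
    · rw [if_pos hi, Finset.sum_eq_single (⟨(i:ℕ), hi⟩ : Fin n)]
      · rw [if_pos (by apply Fin.ext; rfl)]
      · intro b _ hb
        rw [if_neg]
        intro hcontr
        exact hb (by apply Fin.ext; exact (congrArg Fin.val hcontr).symm)
      · simp
    · rw [if_neg hi]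
      symm
      apply Finset.sum_eq_zero
      intro j _
      rw [if_neg]
      intro hh
      exact hi (by rw [hh]; exact j.isLt)
  rw [Finset.sum_congr rfl (fun i _ => key i), Finset.sum_comm]
  apply Finset.sum_congr rfl
  intro j _
  rw [Finset.sum_ite_eq' Finset.univ (Fin.castLE h j) F, if_pos (Finset.mem_univ _)]

lemma entry_bound {d : ℕ} (P : Matrix (Fin p) (Fin d) ℝ) (h : Pᵀ * P = 1) (i j : Fin p) :
    |(P * Pᵀ) i j| ≤ 1 := by
  set Q := P * Pᵀ with hQ
  have hidem : Q * Q = Q := by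
    rw [hQ, Matrix.mul_assoc, ← Matrix.mul_assoc Pᵀ P, h, Matrix.one_mul]
  have hdiag : ∀ k, Q k k = ∑ l, (Q k l)^2 := by
    intro k
    conv_lhs => rw [← hidem]
    rw [Matrix.mul_apply]
    apply Finset.sum_congr rfl
    intro l _
    have hsymm : Q l k = Q k l := by
      rw [hQ]
      rw [Matrix.mul_apply, Matrix.mul_apply]
      simp [Matrix.transpose_apply, mul_comm]
    rw [hsymm]; ring
  have hkk : ∀ k, 0 ≤ Q k k ∧ Q k k ≤ 1 := by
    intro k
    have h1 : Q k k = ∑ l, (Q k l)^2 := hdiag k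
    have hge : 0 ≤ Q k k := by rw [h1]; positivity
    have hsq : (Q k k)^2 ≤ Q k k := by
      conv_rhs => rw [h1]
      exact Finset.single_le_sum (f := fun l => (Q k l)^2)
        (fun l _ => sq_nonneg _) (Finset.mem_univ k)
    exact ⟨hge, by nlinarith⟩
  have hij : (Q i j)^2 ≤ 1 := by
    calc (Q i j)^2 ≤ ∑ l, (Q i l)^2 :=
          Finset.single_le_sum (f := fun l => (Q i l)^2) (fun l _ => sq_nonneg _)
            (Finset.mem_univ j)
    _ = Q i i := (hdiag i).symm
    _ ≤ 1 := (hkk i).2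
  rw [abs_le]
  constructor <;> nlinarith

lemma dot_self_eq (v : Fin p → ℝ) : v ⬝ᵥ v = ∑ i, (v i)^2 := by
  simp [dotProduct, sq]

lemma frobSq_eq_trace {m n : ℕ} (M : Matrix (Fin m) (Fin n) ℝ) :
    frobSq M = (Mᵀ * M).trace := by
  simp only [frobSq, Matrix.trace, Matrix.diag, Matrix.mul_apply, Matrix.transpose_apply, sq]
  exact Finset.sum_comm

set_option maxHeartbeats 1000000 in
lemma dk {d₀ : ℕ} (hd₀p : d₀ ≤ p)
    (A₀ : Matrix (Fin p) (Fin d₀) ℝ) (hA₀ : A₀ᵀ * A₀ = 1)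
    (Pim U : Matrix (Fin p) (Fin p) ℝ) (lam : Fin p → ℝ)
    (hU : Uᵀ * U = 1) (hlam : Antitone lam)
    (hdec : Pim = U * Matrix.diagonal lam * Uᵀ)
    (Ahat : Matrix (Fin p) (Fin d₀) ℝ)
    (hAhat : ∀ i j, Ahat i j = U i (Fin.castLE hd₀p j)) :
    dF Ahat A₀ ≤ 2 * Real.sqrt d₀ * opNorm (Pim - A₀ * A₀ᵀ) := by
  classical
  set E := Pim - A₀ * A₀ᵀ with hE
  set ε := opNorm E with hεdef
  have hεnn : 0 ≤ ε := opNorm_nonneg E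
  have hUU : U * Uᵀ = 1 := mul_eq_one_comm.mp hU
  have hUUt : (Uᵀ)ᵀ * Uᵀ = 1 := by rw [Matrix.transpose_transpose]; exact hUU
  set B := Uᵀ * A₀ with hB
  have hP0a : ∀ x, (A₀ * A₀ᵀ) *ᵥ (A₀ *ᵥ x) = A₀ *ᵥ x := by
    intro x
    rw [Matrix.mulVec_mulVec, Matrix.mul_assoc, hA₀, Matrix.mul_one]
  have hPisplit : Pim = (A₀ * A₀ᵀ) + E := by rw [hE, add_sub_cancel]
  -- quadratic form bound for E
  have hqE : ∀ v : Fin p → ℝ, |v ⬝ᵥ (E *ᵥ v)| ≤ ε * ∑ i, (v i)^2 := by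
    intro v
    have hcs : (v ⬝ᵥ (E *ᵥ v))^2 ≤ (∑ i, (v i)^2) * (∑ i, ((E *ᵥ v) i)^2) := by
      have hdp : v ⬝ᵥ (E *ᵥ v) = ∑ i, v i * (E *ᵥ v) i := rfl
      rw [hdp]
      exact Finset.sum_mul_sq_le_sq_mul_sq _ _ _
    have hop := sq_mulVec_le E v
    have h0 : (0:ℝ) ≤ ∑ i, (v i)^2 := by positivity
    have h1 : (0:ℝ) ≤ ∑ i, ((E *ᵥ v) i)^2 := by positivity
    rw [abs_le]
    constructor <;> nlinarith [sq_nonneg (v ⬝ᵥ (E *ᵥ v) + ε * ∑ i, (v i)^2),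
      sq_nonneg (v ⬝ᵥ (E *ᵥ v) - ε * ∑ i, (v i)^2), mul_nonneg hεnn h0]
  -- quadratic form of the projection
  have hqP0 : ∀ v : Fin p → ℝ, v ⬝ᵥ ((A₀ * A₀ᵀ) *ᵥ v) = (A₀ᵀ *ᵥ v) ⬝ᵥ (A₀ᵀ *ᵥ v) := by
    intro v
    rw [← Matrix.mulVec_mulVec, Matrix.dotProduct_mulVec, ← Matrix.mulVec_transpose]
  -- eigen quadratic form
  have hquadU : ∀ x : Fin p → ℝ,
      (U *ᵥ x) ⬝ᵥ (Pim *ᵥ (U *ᵥ x)) = ∑ i, lam i * (x i)^2 := by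
    intro x
    have h1 : Pim *ᵥ (U *ᵥ x) = U *ᵥ ((Matrix.diagonal lam) *ᵥ x) := by
      rw [Matrix.mulVec_mulVec, hdec, Matrix.mul_assoc (U * Matrix.diagonal lam) Uᵀ U, hU,
        Matrix.mul_one, ← Matrix.mulVec_mulVec]
    rw [h1, orth_dot hU]
    unfold dotProduct
    apply Finset.sum_congr rfl
    intro i _
    rw [Matrix.mulVec_diagonal]
    ring
  have hUdot : ∀ x y : Fin p → ℝ, (U *ᵥ x) ⬝ᵥ (U *ᵥ y) = x ⬝ᵥ y := fun x y => orth_dot hU x y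
  -- eigenvalue lower bound
  have hlow : ∀ i : Fin p, -ε ≤ lam i := by
    intro i
    set e : Fin p → ℝ := fun k => if k = i then 1 else 0 with he
    have h1 : ∑ k, lam k * (e k)^2 = lam i := by
      rw [Finset.sum_eq_single i (fun b _ hb => by simp [he, hb])
        (fun h => absurd (Finset.mem_univ i) h)]
      simp [he]
    have h2 : ∑ k, (e k)^2 = 1 := by
      rw [Finset.sum_eq_single i (fun b _ hb => by simp [he, hb])
        (fun h => absurd (Finset.mem_univ i) h)]
      simp [he]
    have hq := hquadU e
    rw [h1] at hq
    set u := U *ᵥ e with hu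
    have huu : ∑ k, (u k)^2 = 1 := by
      rw [← dot_self_eq, hu, hUdot, dot_self_eq, h2]
    have hsplit : u ⬝ᵥ (Pim *ᵥ u) = u ⬝ᵥ ((A₀ * A₀ᵀ) *ᵥ u) + u ⬝ᵥ (E *ᵥ u) := by
      conv_lhs => rw [hPisplit]
      rw [Matrix.add_mulVec, dotProduct_add]
    have hpos : 0 ≤ u ⬝ᵥ ((A₀ * A₀ᵀ) *ᵥ u) := by
      rw [hqP0, dot_self_eq]; positivity
    have habs := hqE u
    rw [huu, mul_one] at habs
    rw [abs_le] at habs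
    rw [hsplit] at hq
    linarith [habs.1]
  -- eigenvalue upper bound for indices ≥ d₀
  have hup : ∀ i : Fin p, d₀ ≤ (i:ℕ) → lam i ≤ ε := by
    intro i hi
    have hd₀p' : d₀ < p := lt_of_le_of_lt hi i.isLt
    have hpc : d₀ + 1 ≤ p := hd₀p'
    set N : Matrix (Fin d₀) (Fin (d₀+1)) ℝ :=
      fun r c => (A₀ᵀ * U) r (Fin.castLE hpc c) with hN
    obtain ⟨c, hcker, hc0⟩ : ∃ c : Fin (d₀+1) → ℝ, N *ᵥ c = 0 ∧ c ≠ 0 := by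
      by_contra hcon
      push_neg at hcon
      have hinj : Function.Injective (Matrix.mulVecLin N) := by
        rw [← LinearMap.ker_eq_bot, Submodule.eq_bot_iff]
        intro x hx
        by_contra hx0
        exact hx0 (hcon x hx)
      have hle := LinearMap.finrank_le_finrank_of_injective hinj
      simp only [Module.finrank_pi, Fintype.card_fin] at hle
      omega
    set x : Fin p → ℝ :=
      fun i' => ∑ j : Fin (d₀+1), if i' = Fin.castLE hpc j then c j else 0 with hx
    have hsum : ∀ f : Fin p → ℝ,
        ∑ i', f i' * x i' = ∑ j, f (Fin.castLE hpc j) * c j := by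
      intro f
      simp only [hx, Finset.mul_sum]
      rw [Finset.sum_comm]
      apply Finset.sum_congr rfl
      intro j _
      simp only [mul_ite, mul_zero]
      rw [Finset.sum_ite_eq' Finset.univ (Fin.castLE hpc j) (fun i' => f i' * c j),
        if_pos (Finset.mem_univ _)]
    have hxzero : ∀ i' : Fin p, ¬((i':ℕ) < d₀ + 1) → x i' = 0 := by
      intro i' h'
      rw [hx]
      apply Finset.sum_eq_zero
      intro j _
      rw [if_neg]
      intro hh
      exact h' (by rw [hh, Fin.coe_castLE]; exact j.isLt)
    have hxc : ∀ j : Fin (d₀+1), x (Fin.castLE hpc j) = c j := by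
      intro j
      show (∑ j' : Fin (d₀+1), if Fin.castLE hpc j = Fin.castLE hpc j' then c j' else 0) = c j
      rw [Finset.sum_eq_single j
        (fun b _ hb => if_neg (fun hh => hb ((Fin.castLE_injective hpc hh).symm)))
        (fun h => absurd (Finset.mem_univ j) h), if_pos rfl]
    have hcc : (0:ℝ) < c ⬝ᵥ c := by
      have hex : ∃ j, c j ≠ 0 := by
        by_contra hno
        push_neg at hno
        exact hc0 (funext hno)
      obtain ⟨j0, hj0⟩ := hex
      rw [dot_self_eq]
      apply Finset.sum_pos' (fun j _ => sq_nonneg _)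
      exact ⟨j0, Finset.mem_univ _, by positivity⟩
    have hxx : ∑ i', (x i')^2 = c ⬝ᵥ c := by
      have h1 : ∑ i', x i' * x i' = ∑ j, x (Fin.castLE hpc j) * c j := hsum x
      have h2 : ∑ i', (x i')^2 = ∑ i', x i' * x i' := by
        apply Finset.sum_congr rfl; intro i' _; ring
      rw [h2, h1]
      apply Finset.sum_congr rfl
      intro j _
      rw [hxc j]
    set i₀ : Fin p := ⟨d₀, hd₀p'⟩ with hi₀
    have hlami : lam i ≤ lam i₀ := hlam (by simpa [Fin.le_def, hi₀] using hi)
    set v := U *ᵥ x with hv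
    have hAv : A₀ᵀ *ᵥ v = 0 := by
      rw [hv, Matrix.mulVec_mulVec]
      ext r
      have h1 : ((A₀ᵀ * U) *ᵥ x) r = ∑ i', (A₀ᵀ * U) r i' * x i' := rfl
      rw [h1, hsum (fun i' => (A₀ᵀ * U) r i')]
      have h2 : ∑ j, (A₀ᵀ * U) r (Fin.castLE hpc j) * c j = (N *ᵥ c) r := rfl
      rw [h2, hcker]
    have hvv : ∑ k, (v k)^2 = c ⬝ᵥ c := by
      rw [← dot_self_eq, hv, hUdot, dot_self_eq, hxx]
    have hq := hquadU x
    have hsplit : v ⬝ᵥ (Pim *ᵥ v) = v ⬝ᵥ ((A₀ * A₀ᵀ) *ᵥ v) + v ⬝ᵥ (E *ᵥ v) := by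
      conv_lhs => rw [hPisplit]
      rw [Matrix.add_mulVec, dotProduct_add]
    have hzero : v ⬝ᵥ ((A₀ * A₀ᵀ) *ᵥ v) = 0 := by
      rw [hqP0, hAv]
      simp
    have habs := hqE v
    rw [hvv] at habs
    rw [abs_le] at habs
    have hPiv : v ⬝ᵥ (Pim *ᵥ v) ≤ ε * (c ⬝ᵥ c) := by
      rw [hsplit, hzero, zero_add]
      exact habs.2
    have hlower : lam i₀ * (c ⬝ᵥ c) ≤ v ⬝ᵥ (Pim *ᵥ v) := by
      rw [hv, hq, ← hxx, Finset.mul_sum]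
      apply Finset.sum_le_sum
      intro i' _
      by_cases h' : (i':ℕ) < d₀ + 1
      · apply mul_le_mul_of_nonneg_right _ (sq_nonneg _)
        apply hlam
        simp [Fin.le_def, hi₀]
        omega
      · rw [hxzero i' h']
        simp
    have : lam i₀ * (c ⬝ᵥ c) ≤ ε * (c ⬝ᵥ c) := le_trans hlower hPiv
    have hle : lam i₀ ≤ ε := le_of_mul_le_mul_right (by linarith) hcc
    linarith
  -- Step 1 : dF = sqrt S
  set Phat := Ahat * Ahatᵀ with hPhat
  set P0 := A₀ * A₀ᵀ with hP0
  have hAtA : Ahatᵀ * Ahat = (1 : Matrix (Fin d₀) (Fin d₀) ℝ) := by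
    ext j k
    rw [Matrix.mul_apply]
    simp only [Matrix.transpose_apply, hAhat]
    have h1 : ∑ i, U i (Fin.castLE hd₀p j) * U i (Fin.castLE hd₀p k)
        = (Uᵀ * U) (Fin.castLE hd₀p j) (Fin.castLE hd₀p k) := by
      rw [Matrix.mul_apply]
      apply Finset.sum_congr rfl
      intro i _
      rw [Matrix.transpose_apply]
    rw [h1, hU]
    simp [Matrix.one_apply, Fin.castLE_inj]
  have htr1 : (Phat * Phat).trace = (d₀:ℝ) := by
    have h1 : Phat * Phat = Ahat * Ahatᵀ := by
      rw [hPhat, Matrix.mul_assoc, ← Matrix.mul_assoc Ahatᵀ Ahat Ahatᵀ, hAtA, Matrix.one_mul]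
    rw [h1, Matrix.trace_mul_comm, hAtA, Matrix.trace_one]
    simp
  have htr2 : (P0 * P0).trace = (d₀:ℝ) := by
    have h1 : P0 * P0 = A₀ * A₀ᵀ := by
      rw [hP0, Matrix.mul_assoc, ← Matrix.mul_assoc A₀ᵀ A₀ A₀ᵀ, hA₀, Matrix.one_mul]
    rw [h1, Matrix.trace_mul_comm, hA₀, Matrix.trace_one]
    simp
  have htr3 : (Phat * P0).trace
      = ∑ i : Fin p, (if (i:ℕ) < d₀ then ∑ j : Fin d₀, (B i j)^2 else 0) := by
    set C := Ahatᵀ * A₀ with hC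
    have h1 : (Phat * P0).trace = (C * Cᵀ).trace := by
      rw [hPhat, hP0]
      calc (Ahat * Ahatᵀ * (A₀ * A₀ᵀ)).trace
          = (Ahat * (Ahatᵀ * (A₀ * A₀ᵀ))).trace := by rw [Matrix.mul_assoc]
        _ = ((Ahatᵀ * (A₀ * A₀ᵀ)) * Ahat).trace := Matrix.trace_mul_comm _ _
        _ = (C * Cᵀ).trace := by
            rw [hC, Matrix.transpose_mul, Matrix.transpose_transpose]
            rw [← Matrix.mul_assoc, ← Matrix.mul_assoc, Matrix.mul_assoc (Ahatᵀ * A₀)]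
    have h2 : (C * Cᵀ).trace = ∑ j : Fin d₀, ∑ k : Fin d₀, (C j k)^2 := by
      simp only [Matrix.trace, Matrix.diag, Matrix.mul_apply, Matrix.transpose_apply, sq]
    have h3 : ∀ (j : Fin d₀) (k : Fin d₀), C j k = B (Fin.castLE hd₀p j) k := by
      intro j k
      rw [hC, hB, Matrix.mul_apply, Matrix.mul_apply]
      apply Finset.sum_congr rfl
      intro i _
      rw [Matrix.transpose_apply, Matrix.transpose_apply, hAhat]
    rw [h1, h2, sum_castLE hd₀p (fun i => ∑ k : Fin d₀, (B i k)^2)]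
    apply Finset.sum_congr rfl
    intro j _
    apply Finset.sum_congr rfl
    intro k _
    rw [h3]
  have htr4 : ∑ i : Fin p, ∑ j : Fin d₀, (B i j)^2 = (d₀:ℝ) := by
    have hBtB : Bᵀ * B = (1 : Matrix (Fin d₀) (Fin d₀) ℝ) := by
      rw [hB, Matrix.transpose_mul, Matrix.transpose_transpose, Matrix.mul_assoc,
        ← Matrix.mul_assoc U Uᵀ A₀, hUU, Matrix.one_mul, hA₀]
    have h1 : ∑ i : Fin p, ∑ j : Fin d₀, (B i j)^2 = (Bᵀ * B).trace := by
      simp only [Matrix.trace, Matrix.diag, Matrix.mul_apply, Matrix.transpose_apply, sq]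
      exact Finset.sum_comm
    rw [h1, hBtB, Matrix.trace_one]
    simp
  set S := ∑ j : Fin d₀, ∑ i : Fin p, (if (i:ℕ) < d₀ then 0 else B i j)^2 with hS
  have hhalf : (1/2 : ℝ) * frobSq (Phat - P0) = S := by
    have hsymm : (Phat - P0)ᵀ = Phat - P0 := by
      rw [Matrix.transpose_sub, hPhat, hP0, Matrix.transpose_mul, Matrix.transpose_mul,
        Matrix.transpose_transpose, Matrix.transpose_transpose]
    have hexp : frobSq (Phat - P0) = 2 * (d₀:ℝ) - 2 * (Phat * P0).trace := by
      rw [frobSq_eq_trace, hsymm]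
      have hmul : (Phat - P0) * (Phat - P0)
          = Phat * Phat - Phat * P0 - (P0 * Phat - P0 * P0) := by
        rw [Matrix.sub_mul, Matrix.mul_sub, Matrix.mul_sub]
      rw [hmul, Matrix.trace_sub, Matrix.trace_sub, Matrix.trace_sub, htr1, htr2,
        Matrix.trace_mul_comm P0 Phat]
      ring
    rw [hexp, htr3, hS]
    rw [Finset.sum_comm]
    have hsplit2 : ∀ i : Fin p,
        ∑ j : Fin d₀, (if (i:ℕ) < d₀ then 0 else B i j)^2
          = (∑ j : Fin d₀, (B i j)^2) - (if (i:ℕ) < d₀ then ∑ j : Fin d₀, (B i j)^2 else 0) := by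
      intro i
      by_cases h' : (i:ℕ) < d₀ <;> simp [h']
    rw [Finset.sum_congr rfl (fun i _ => hsplit2 i), Finset.sum_sub_distrib, htr4]
    ring
  have hdF : dF Ahat A₀ = Real.sqrt S := by
    rw [dF, ← hPhat, ← hP0, hhalf]
  -- Step 2 : column bound
  have hcol : ∀ j : Fin d₀,
      ∑ i : Fin p, (if (i:ℕ) < d₀ then 0 else B i j)^2 ≤ (2*ε)^2 := by
    intro j
    set a : Fin p → ℝ := fun i => A₀ i j with ha
    have haA : a = A₀ *ᵥ (fun k => if k = j then 1 else 0) := by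
      ext i
      rw [ha]
      show A₀ i j = ∑ k, A₀ i k * (if k = j then 1 else 0)
      rw [Finset.sum_eq_single j (fun b _ hb => by simp [hb])
        (fun h => absurd (Finset.mem_univ j) h)]
      simp
    have haa : ∑ i, (a i)^2 = 1 := by
      have h1 : ∑ i, (a i)^2 = (A₀ᵀ * A₀) j j := by
        rw [Matrix.mul_apply]
        apply Finset.sum_congr rfl
        intro i _
        rw [Matrix.transpose_apply, ha]
        ring
      rw [h1, hA₀]
      simp [Matrix.one_apply]
    set b := Uᵀ *ᵥ a with hb
    have hbB : ∀ i, b i = B i j := fun i => rfl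
    have hbb : ∑ i, (b i)^2 = 1 := by
      rw [← dot_self_eq, hb, orth_dot hUUt, dot_self_eq, haa]
    set w := (P0 - Pim) *ᵥ a with hw
    have hfix : P0 *ᵥ a = a := by
      rw [hP0, haA, hP0a]
    have hUtPi : Uᵀ * Pim = Matrix.diagonal lam * Uᵀ := by
      rw [hdec, ← Matrix.mul_assoc, ← Matrix.mul_assoc, hU, Matrix.one_mul]
    have hdecb : ∀ i, b i = (Uᵀ *ᵥ w) i + lam i * b i := by
      have h1 : Uᵀ *ᵥ a = Uᵀ *ᵥ (w + Pim *ᵥ a) := by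
        congr 1
        rw [hw, Matrix.sub_mulVec, hfix, sub_add_cancel]
      have h2 : Uᵀ *ᵥ (Pim *ᵥ a) = Matrix.diagonal lam *ᵥ b := by
        rw [Matrix.mulVec_mulVec, hUtPi, ← Matrix.mulVec_mulVec, ← hb]
      intro i
      conv_lhs => rw [hb, h1]
      rw [Matrix.mulVec_add, Pi.add_apply, h2, Matrix.mulVec_diagonal]
    set x1 : Fin p → ℝ := fun i => if (i:ℕ) < d₀ then 0 else (Uᵀ *ᵥ w) i with hx1
    set x2 : Fin p → ℝ := fun i => if (i:ℕ) < d₀ then 0 else lam i * b i with hx2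
    have hxy : ∀ i : Fin p, (if (i:ℕ) < d₀ then 0 else B i j) = x1 i + x2 i := by
      intro i
      by_cases h' : (i:ℕ) < d₀
      · simp only [hx1, hx2, if_pos h']
        norm_num
      · simp only [hx1, hx2, if_neg h']
        rw [← hbB i]
        exact hdecb i
    have hww : ∑ i, (w i)^2 ≤ ε^2 := by
      have h1 := sq_mulVec_le (P0 - Pim) a
      have h2 : opNorm (P0 - Pim) = ε := by
        have : P0 - Pim = -E := by rw [hE, neg_sub]
        rw [this, opNorm_neg]
      rw [h2, haa, mul_one] at h1
      exact h1
    have hx1bound : ∑ i, (x1 i)^2 ≤ ε^2 := by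
      have h1 : ∑ i, (x1 i)^2 ≤ ∑ i, ((Uᵀ *ᵥ w) i)^2 := by
        apply Finset.sum_le_sum
        intro i _
        by_cases h' : (i:ℕ) < d₀ <;> simp [hx1, h', sq_nonneg]
      have h2 : ∑ i, ((Uᵀ *ᵥ w) i)^2 = ∑ i, (w i)^2 := by
        rw [← dot_self_eq, orth_dot hUUt, dot_self_eq]
      linarith [hww]
    have hx2bound : ∑ i, (x2 i)^2 ≤ ε^2 := by
      have h1 : ∑ i, (x2 i)^2 ≤ ∑ i, ε^2 * (b i)^2 := by
        apply Finset.sum_le_sum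
        intro i _
        by_cases h' : (i:ℕ) < d₀
        · simp [hx2, h']
          positivity
        · have hge : d₀ ≤ (i:ℕ) := le_of_not_gt h'
          have hl2 : lam i ≤ ε := hup i hge
          have hl1 : -ε ≤ lam i := hlow i
          have : (lam i)^2 ≤ ε^2 := sq_le_sq' hl1 hl2
          simp only [hx2, if_neg h']
          rw [mul_pow]
          exact mul_le_mul_of_nonneg_right this (sq_nonneg _)
      rw [← Finset.mul_sum, hbb, mul_one] at h1
      exact h1
    have hsqrt : Real.sqrt (∑ i : Fin p, (if (i:ℕ) < d₀ then 0 else B i j)^2) ≤ 2 * ε := by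
      calc Real.sqrt (∑ i : Fin p, (if (i:ℕ) < d₀ then 0 else B i j)^2)
          = Real.sqrt (∑ i : Fin p, (x1 i + x2 i)^2) := by
            congr 1
            exact Finset.sum_congr rfl (fun i _ => by rw [hxy i])
        _ ≤ Real.sqrt (∑ i, (x1 i)^2) + Real.sqrt (∑ i, (x2 i)^2) := sqrt_sum_sq_add_le _ _
        _ ≤ Real.sqrt (ε^2) + Real.sqrt (ε^2) := by
            gcongr
        _ = 2 * ε := by rw [Real.sqrt_sq hεnn]; ring
    have h0 : (0:ℝ) ≤ ∑ i : Fin p, (if (i:ℕ) < d₀ then 0 else B i j)^2 := by positivity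
    nlinarith [Real.sq_sqrt h0, Real.sqrt_nonneg (∑ i : Fin p, (if (i:ℕ) < d₀ then 0 else B i j)^2)]
  -- conclude
  rw [hdF]
  have hSle : S ≤ (d₀:ℝ) * (2*ε)^2 := by
    rw [hS]
    calc ∑ j : Fin d₀, ∑ i : Fin p, (if (i:ℕ) < d₀ then 0 else B i j)^2
        ≤ ∑ _j : Fin d₀, (2*ε)^2 := Finset.sum_le_sum (fun j _ => hcol j)
      _ = (d₀:ℝ) * (2*ε)^2 := by
          rw [Finset.sum_const, Finset.card_univ, Fintype.card_fin, nsmul_eq_mul]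
  calc Real.sqrt S ≤ Real.sqrt ((d₀:ℝ) * (2*ε)^2) := Real.sqrt_le_sqrt hSle
    _ = 2 * Real.sqrt d₀ * ε := by
        rw [Real.sqrt_mul (Nat.cast_nonneg d₀), Real.sqrt_sq (by positivity)]
        ring


end Stmt0Aux

open Stmt0Aux

set_option maxHeartbeats 1000000 in
/-- Let `P₁, …, P_L` be i.i.d. random real `p × d` matrices with `Pℓᵀ Pℓ = I_d`
almost surely; set `Π^∞ = 𝔼[P₁ P₁ᵀ]` (entrywise expectation) and
`Π̂ = (1/L) ∑ℓ Pℓ Pℓᵀ`.  Let `Â^L` be a measurably chosen random `p × d₀` matrix whose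
columns are, for each outcome, orthonormal eigenvectors of the symmetric matrix `Π̂`
corresponding to its `d₀` largest eigenvalues counted with multiplicity (expressed here via
an orthogonal matrix `U` and a nonincreasing `lam : Fin p → ℝ` with
`Π̂ = U diagonal(lam) Uᵀ`, with `Â^L` consisting of the first `d₀` columns of `U`).  Then,
with `A₀ ∈ 𝒜_{p×d₀}`,
`𝔼[d_F(𝒮(Â^L), 𝒮(A₀))] ≤ 2 √d₀ ‖Π^∞ − A₀A₀ᵀ‖_op + 2 √d₀ √(2π) p / √L`. -/
theorem stmt0 {Ω : Type*} [MeasureSpace Ω] [IsProbabilityMeasure (ℙ : Measure Ω)]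
    (p d d₀ L : ℕ) (hp : 0 < p) (hd : 0 < d) (hd₀ : 0 < d₀) (hL : 0 < L) (hd₀p : d₀ ≤ p)
    (A₀ : Matrix (Fin p) (Fin d₀) ℝ) (hA₀ : A₀ᵀ * A₀ = 1)
    (P : Fin L → Ω → Matrix (Fin p) (Fin d) ℝ)
    (hmeas : ∀ ℓ, Measurable (P ℓ))
    (hindep : iIndepFun P (ℙ : Measure Ω))
    (hident : ∀ ℓ, IdentDistrib (P ℓ) (P ⟨0, hL⟩) (ℙ : Measure Ω) (ℙ : Measure Ω))
    (horth : ∀ ℓ, ∀ᵐ ω ∂(ℙ : Measure Ω), (P ℓ ω)ᵀ * P ℓ ω = 1)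
    (PiInf : Matrix (Fin p) (Fin p) ℝ)
    (hPiInf : ∀ i j, PiInf i j = ∫ ω, (P ⟨0, hL⟩ ω * (P ⟨0, hL⟩ ω)ᵀ) i j ∂(ℙ : Measure Ω))
    (PiHat : Ω → Matrix (Fin p) (Fin p) ℝ)
    (hPiHat : ∀ ω, PiHat ω = (L : ℝ)⁻¹ • ∑ ℓ, P ℓ ω * (P ℓ ω)ᵀ)
    (AhatL : Ω → Matrix (Fin p) (Fin d₀) ℝ)
    (hAmeas : Measurable AhatL)
    (hAhatL : ∀ ω, ∃ (U : Matrix (Fin p) (Fin p) ℝ) (lam : Fin p → ℝ),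
      Uᵀ * U = 1 ∧ Antitone lam ∧ PiHat ω = U * Matrix.diagonal lam * Uᵀ ∧
      ∀ i j, AhatL ω i j = U i (Fin.castLE hd₀p j)) :
    ∫ ω, dF (AhatL ω) A₀ ∂(ℙ : Measure Ω)
      ≤ 2 * Real.sqrt d₀ * opNorm (PiInf - A₀ * A₀ᵀ)
        + 2 * Real.sqrt d₀ * Real.sqrt (2 * Real.pi) * p / Real.sqrt L := by
  classical
  set μ : Measure Ω := (ℙ : Measure Ω) with hμ
  have hL0 : ((L:ℝ)) ≠ 0 := Nat.cast_ne_zero.mpr hL.ne'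
  set P0 : Matrix (Fin p) (Fin p) ℝ := A₀ * A₀ᵀ with hP0
  set K : ℝ := 2 * Real.sqrt d₀ * opNorm (PiInf - P0) with hK
  set g : Ω → ℝ := fun ω => Real.sqrt (frobSq (PiHat ω - PiInf)) with hg
  set f : Ω → ℝ := fun ω => frobSq (PiHat ω - PiInf) with hf
  -- deterministic pointwise bound
  have hdk : ∀ ω, dF (AhatL ω) A₀ ≤ K + 2 * Real.sqrt d₀ * g ω := by
    intro ω
    obtain ⟨U, lam, hU, hlam, hdec, hAh⟩ := hAhatL ω
    have h1 := dk hd₀p A₀ hA₀ (PiHat ω) U lam hU hlam hdec (AhatL ω) hAh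
    have h2 : opNorm (PiHat ω - P0) ≤ opNorm (PiHat ω - PiInf) + opNorm (PiInf - P0) :=
      opNorm_sub_le _ _ _
    have h3 : opNorm (PiHat ω - PiInf) ≤ g ω := opNorm_le_sqrt_frobSq _
    have h4 : (0:ℝ) ≤ 2 * Real.sqrt d₀ := by positivity
    calc dF (AhatL ω) A₀ ≤ 2 * Real.sqrt d₀ * opNorm (PiHat ω - P0) := h1
      _ ≤ 2 * Real.sqrt d₀ * (opNorm (PiHat ω - PiInf) + opNorm (PiInf - P0)) :=
          mul_le_mul_of_nonneg_left h2 h4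
      _ ≤ K + 2 * Real.sqrt d₀ * g ω := by
          rw [hK]
          nlinarith [mul_le_mul_of_nonneg_left h3 h4]
  -- measurability of entries
  have hPentry : ∀ (ℓ : Fin L) (i : Fin p) (k : Fin d), Measurable (fun ω => P ℓ ω i k) :=
    fun ℓ i k => (measurable_pi_apply k).comp ((measurable_pi_apply i).comp (hmeas ℓ))
  have hXmeas : ∀ (ℓ : Fin L) (i j : Fin p),
      Measurable (fun ω => (P ℓ ω * (P ℓ ω)ᵀ) i j) := by
    intro ℓ i j
    have : (fun ω => (P ℓ ω * (P ℓ ω)ᵀ) i j)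
        = fun ω => ∑ k, P ℓ ω i k * P ℓ ω j k := by
      funext ω; rw [Matrix.mul_apply]; rfl
    rw [this]
    exact Finset.measurable_sum _ (fun k _ => (hPentry ℓ i k).mul (hPentry ℓ j k))
  have hPiHatEntry : ∀ (i j : Fin p), Measurable (fun ω => PiHat ω i j) := by
    intro i j
    have h1 : ∀ ω, PiHat ω i j = (L:ℝ)⁻¹ * ∑ ℓ, (P ℓ ω * (P ℓ ω)ᵀ) i j := by
      intro ω
      rw [hPiHat ω, Matrix.smul_apply, Matrix.sum_apply]
      simp
    simp_rw [h1]
    exact (Finset.measurable_sum _ (fun ℓ _ => hXmeas ℓ i j)).const_mul _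
  have hfmeas : Measurable f := by
    have h1 : f = fun ω => ∑ i, ∑ j, (PiHat ω i j - PiInf i j)^2 := by
      funext ω
      rw [hf]
      unfold frobSq
      exact Finset.sum_congr rfl (fun i _ => Finset.sum_congr rfl (fun j _ => by
        rw [Matrix.sub_apply]))
    rw [h1]
    exact Finset.measurable_sum _ (fun i _ => Finset.measurable_sum _
      (fun j _ => ((hPiHatEntry i j).sub measurable_const).pow_const 2))
  -- a.s. bounds
  have hae : ∀ᵐ ω ∂μ, ∀ ℓ, (P ℓ ω)ᵀ * P ℓ ω = 1 := ae_all_iff.mpr horth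
  have hmbound : ∀ (i j : Fin p), |PiInf i j| ≤ 1 := by
    intro i j
    rw [hPiInf i j]
    have := norm_integral_le_of_norm_le_const (μ := μ) (C := 1)
      (f := fun ω => (P ⟨0, hL⟩ ω * (P ⟨0, hL⟩ ω)ᵀ) i j) ?_
    · rwa [Real.norm_eq_abs, probReal_univ, mul_one] at this
    · filter_upwards [horth ⟨0, hL⟩] with ω hω
      rw [Real.norm_eq_abs]
      exact entry_bound _ hω i j
  have hXint : ∀ (ℓ : Fin L) (i j : Fin p),
      Integrable (fun ω => (P ℓ ω * (P ℓ ω)ᵀ) i j) μ := by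
    intro ℓ i j
    apply (integrable_const (1:ℝ)).mono' (hXmeas ℓ i j).aestronglyMeasurable
    filter_upwards [horth ℓ] with ω hω
    rw [Real.norm_eq_abs]
    exact entry_bound _ hω i j
  -- variance bound per entry
  have hvar : ∀ (i j : Fin p), ∫ ω, ((PiHat ω - PiInf) i j)^2 ∂μ ≤ 4 / L := by
    intro i j
    set m : ℝ := PiInf i j with hm
    set G : Matrix (Fin p) (Fin d) ℝ → ℝ := fun M => (M * Mᵀ) i j - m with hG
    have hGmeas : Measurable G := by
      have h1 : G = fun M => (∑ k, M i k * M j k) - m := rfl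
      rw [h1]
      exact (Finset.measurable_sum _ (fun k _ =>
        (((measurable_pi_apply k).comp (measurable_pi_apply i))).mul
          ((measurable_pi_apply k).comp (measurable_pi_apply j)))).sub measurable_const
    set Y : Fin L → Ω → ℝ := fun ℓ => G ∘ (P ℓ) with hY
    have hYmeas : ∀ ℓ, Measurable (Y ℓ) := fun ℓ => hGmeas.comp (hmeas ℓ)
    have hYbound : ∀ ℓ, ∀ᵐ ω ∂μ, |Y ℓ ω| ≤ 2 := by
      intro ℓ
      filter_upwards [horth ℓ] with ω hω
      have h1 : |(P ℓ ω * (P ℓ ω)ᵀ) i j| ≤ 1 := entry_bound _ hω i j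
      have h2 := hmbound i j
      calc |Y ℓ ω| = |(P ℓ ω * (P ℓ ω)ᵀ) i j - m| := rfl
        _ ≤ |(P ℓ ω * (P ℓ ω)ᵀ) i j| + |m| := abs_sub _ _
        _ ≤ 2 := by rw [hm] at *; linarith
    have hYint : ∀ ℓ, Integrable (Y ℓ) μ := by
      intro ℓ
      apply (integrable_const (2:ℝ)).mono' (hYmeas ℓ).aestronglyMeasurable
      filter_upwards [hYbound ℓ] with ω hω
      rwa [Real.norm_eq_abs]
    have hYmean : ∀ ℓ, ∫ ω, Y ℓ ω ∂μ = 0 := by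
      intro ℓ
      have hid : IdentDistrib (Y ℓ) (Y ⟨0, hL⟩) μ μ := (hident ℓ).comp hGmeas
      have h1 : ∫ ω, Y ℓ ω ∂μ = ∫ ω, Y ⟨0, hL⟩ ω ∂μ := hid.integral_eq
      have h2 : ∫ ω, Y ⟨0, hL⟩ ω ∂μ
          = (∫ ω, (P ⟨0, hL⟩ ω * (P ⟨0, hL⟩ ω)ᵀ) i j ∂μ) - m := by
        have : (fun ω => Y ⟨0, hL⟩ ω)
            = fun ω => (P ⟨0, hL⟩ ω * (P ⟨0, hL⟩ ω)ᵀ) i j - m := rfl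
        rw [this, integral_sub (hXint ⟨0, hL⟩ i j) (integrable_const m), integral_const]
        simp [measure_univ]
      rw [h1, h2, hm, hPiInf i j]
      ring
    have hYsq : ∀ ℓ, ∫ ω, (Y ℓ ω)^2 ∂μ ≤ 4 := by
      intro ℓ
      have h1 : ∫ ω, (Y ℓ ω)^2 ∂μ ≤ ∫ _ω, (4:ℝ) ∂μ := by
        apply integral_mono_of_nonneg (Filter.Eventually.of_forall (fun ω => sq_nonneg _))
          (integrable_const 4)
        filter_upwards [hYbound ℓ] with ω hω
        nlinarith [abs_nonneg (Y ℓ ω), sq_abs (Y ℓ ω)]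
      rwa [integral_const, probReal_univ, one_smul] at h1
    have hpairint : ∀ ℓ k, Integrable (fun ω => Y ℓ ω * Y k ω) μ := by
      intro ℓ k
      apply (integrable_const (4:ℝ)).mono' ((hYmeas ℓ).mul (hYmeas k)).aestronglyMeasurable
      filter_upwards [hYbound ℓ, hYbound k] with ω h1 h2
      rw [Real.norm_eq_abs, Pi.mul_apply, abs_mul]
      nlinarith [abs_nonneg (Y ℓ ω), abs_nonneg (Y k ω)]
    have hYcross : ∀ ℓ k, ℓ ≠ k → ∫ ω, Y ℓ ω * Y k ω ∂μ = 0 := by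
      intro ℓ k hne
      have hind : IndepFun (Y ℓ) (Y k) μ := (hindep.indepFun hne).comp hGmeas hGmeas
      rw [hind.integral_fun_mul_eq_mul_integral (hYmeas ℓ).aestronglyMeasurable (hYmeas k).aestronglyMeasurable,
        hYmean ℓ, hYmean k, mul_zero]
    have hent : ∀ ω, (PiHat ω - PiInf) i j = (L:ℝ)⁻¹ * ∑ ℓ, Y ℓ ω := by
      intro ω
      rw [Matrix.sub_apply, hPiHat ω, Matrix.smul_apply, Matrix.sum_apply]
      have h1 : ∑ ℓ, Y ℓ ω = (∑ ℓ, (P ℓ ω * (P ℓ ω)ᵀ) i j) - L * m := by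
        have h0 : ∀ ℓ : Fin L, Y ℓ ω = (P ℓ ω * (P ℓ ω)ᵀ) i j - m := fun ℓ => rfl
        rw [Finset.sum_congr rfl (fun ℓ _ => h0 ℓ), Finset.sum_sub_distrib, Finset.sum_const,
          Finset.card_univ, Fintype.card_fin, nsmul_eq_mul]
      rw [h1, mul_sub, smul_eq_mul]
      field_simp
      rw [hm]
    have hsum_int : ∀ ℓ, Integrable (fun ω => ∑ k, Y ℓ ω * Y k ω) μ := by
      intro ℓ
      exact integrable_finset_sum _ (fun k _ => hpairint ℓ k)
    calc ∫ ω, ((PiHat ω - PiInf) i j)^2 ∂μ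
        = ∫ ω, ((L:ℝ)⁻¹)^2 * (∑ ℓ, ∑ k, Y ℓ ω * Y k ω) ∂μ := by
          apply integral_congr_ae
          apply Filter.Eventually.of_forall
          intro ω
          show ((PiHat ω - PiInf) i j)^2 = ((L:ℝ)⁻¹)^2 * (∑ ℓ, ∑ k, Y ℓ ω * Y k ω)
          rw [hent ω, mul_pow, pow_two (∑ ℓ, Y ℓ ω)]
          rw [Finset.sum_mul_sum]
      _ = ((L:ℝ)⁻¹)^2 * ∫ ω, (∑ ℓ, ∑ k, Y ℓ ω * Y k ω) ∂μ := integral_const_mul _ _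
      _ = ((L:ℝ)⁻¹)^2 * ∑ ℓ, ∑ k, ∫ ω, Y ℓ ω * Y k ω ∂μ := by
          rw [integral_finset_sum _ (fun ℓ _ => hsum_int ℓ)]
          congr 1
          exact Finset.sum_congr rfl (fun ℓ _ =>
            integral_finset_sum _ (fun k _ => hpairint ℓ k))
      _ ≤ ((L:ℝ)⁻¹)^2 * ∑ ℓ : Fin L, (4:ℝ) := by
          apply mul_le_mul_of_nonneg_left _ (by positivity)
          apply Finset.sum_le_sum
          intro ℓ _
          rw [Finset.sum_eq_single ℓ (fun k _ hk => hYcross ℓ k (Ne.symm hk))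
            (fun h => absurd (Finset.mem_univ ℓ) h)]
          have h1 : (fun ω => Y ℓ ω * Y ℓ ω) = fun ω => (Y ℓ ω)^2 := by
            funext ω; ring
          rw [h1]
          exact hYsq ℓ
      _ = 4 / L := by
          rw [Finset.sum_const, Finset.card_univ, Fintype.card_fin, nsmul_eq_mul]
          field_simp
  -- integral of frobSq
  have hfb : ∀ᵐ ω ∂μ, ∀ (i j : Fin p), |PiHat ω i j - PiInf i j| ≤ 2 := by
    filter_upwards [hae] with ω hω
    intro i j
    have h1 : |PiHat ω i j| ≤ 1 := by
      have h2 : PiHat ω i j = (L:ℝ)⁻¹ * ∑ ℓ, (P ℓ ω * (P ℓ ω)ᵀ) i j := by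
        rw [hPiHat ω, Matrix.smul_apply, Matrix.sum_apply]; simp
      rw [h2, abs_mul, abs_inv, Nat.abs_cast]
      have h3 : |∑ ℓ, (P ℓ ω * (P ℓ ω)ᵀ) i j| ≤ L := by
        calc |∑ ℓ, (P ℓ ω * (P ℓ ω)ᵀ) i j| ≤ ∑ ℓ, |(P ℓ ω * (P ℓ ω)ᵀ) i j| :=
              Finset.abs_sum_le_sum_abs _ _
          _ ≤ ∑ ℓ : Fin L, (1:ℝ) := Finset.sum_le_sum (fun ℓ _ => entry_bound _ (hω ℓ) i j)
          _ = L := by simp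
      calc ((L:ℝ))⁻¹ * |∑ ℓ, (P ℓ ω * (P ℓ ω)ᵀ) i j| ≤ ((L:ℝ))⁻¹ * L := by
            apply mul_le_mul_of_nonneg_left h3 (by positivity)
        _ = 1 := by field_simp
    have h2 := hmbound i j
    calc |PiHat ω i j - PiInf i j| ≤ |PiHat ω i j| + |PiInf i j| := abs_sub _ _
      _ ≤ 2 := by linarith
  have hfbound : ∀ᵐ ω ∂μ, f ω ≤ 4 * p^2 := by
    filter_upwards [hfb] with ω hω
    rw [hf]
    unfold frobSq
    calc ∑ i, ∑ j, ((PiHat ω - PiInf) i j)^2 ≤ ∑ i : Fin p, ∑ j : Fin p, (4:ℝ) := by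
          apply Finset.sum_le_sum; intro i _
          apply Finset.sum_le_sum; intro j _
          have := hω i j
          rw [Matrix.sub_apply]
          nlinarith [abs_nonneg (PiHat ω i j - PiInf i j), sq_abs (PiHat ω i j - PiInf i j)]
      _ = 4 * p^2 := by simp; ring
  have hfnonneg : ∀ ω, 0 ≤ f ω := by
    intro ω; rw [hf]; unfold frobSq; positivity
  have hfint : Integrable f μ := by
    apply (integrable_const (4 * (p:ℝ)^2)).mono' hfmeas.aestronglyMeasurable
    filter_upwards [hfbound] with ω hω
    rw [Real.norm_eq_abs, abs_of_nonneg (hfnonneg ω)]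
    exact hω
  have hfint_le : ∫ ω, f ω ∂μ ≤ 4 * p^2 / L := by
    have h1 : ∀ ω, f ω = ∑ i, ∑ j, ((PiHat ω - PiInf) i j)^2 := fun ω => rfl
    have hentint : ∀ (i j : Fin p), Integrable (fun ω => ((PiHat ω - PiInf) i j)^2) μ := by
      intro i j
      apply (integrable_const (4:ℝ)).mono'
        (((hPiHatEntry i j).sub measurable_const).pow_const 2).aestronglyMeasurable
      filter_upwards [hfb] with ω hω
      have := hω i j
      show ‖((PiHat ω - PiInf) i j)^2‖ ≤ (4:ℝ)
      have hsub : (PiHat ω - PiInf) i j = PiHat ω i j - PiInf i j := rfl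
      rw [Real.norm_eq_abs, hsub, abs_of_nonneg (sq_nonneg _)]
      nlinarith [abs_nonneg (PiHat ω i j - PiInf i j), sq_abs (PiHat ω i j - PiInf i j)]
    calc ∫ ω, f ω ∂μ = ∑ i, ∑ j, ∫ ω, ((PiHat ω - PiInf) i j)^2 ∂μ := by
          simp_rw [h1]
          rw [integral_finset_sum _ (fun i _ => integrable_finset_sum _ (fun j _ => hentint i j))]
          exact Finset.sum_congr rfl (fun i _ =>
            integral_finset_sum _ (fun j _ => hentint i j))
      _ ≤ ∑ _i : Fin p, ∑ _j : Fin p, (4 / L : ℝ) := by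
          apply Finset.sum_le_sum; intro i _
          apply Finset.sum_le_sum; intro j _
          exact hvar i j
      _ = 4 * p^2 / L := by
          rw [Finset.sum_const, Finset.sum_const, Finset.card_univ, Fintype.card_fin,
            nsmul_eq_mul, nsmul_eq_mul]
          field_simp
  -- integral of g
  set cst : ℝ := 4 * p^2 / L with hcst
  have hcstpos : 0 < cst := by
    rw [hcst]
    have : (0:ℝ) < p := Nat.cast_pos.mpr hp
    have : (0:ℝ) < L := Nat.cast_pos.mpr hL
    positivity
  have hgmeas : Measurable g := hfmeas.sqrt
  have hgint : Integrable g μ := by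
    apply (integrable_const (2 * (p:ℝ))).mono' hgmeas.aestronglyMeasurable
    filter_upwards [hfbound] with ω hω
    rw [Real.norm_eq_abs, hg, abs_of_nonneg (Real.sqrt_nonneg _)]
    calc Real.sqrt (frobSq (PiHat ω - PiInf)) ≤ Real.sqrt (4 * p^2) := Real.sqrt_le_sqrt hω
      _ = 2 * p := by
          rw [show (4 * (p:ℝ)^2) = (2*p)^2 by ring, Real.sqrt_sq (by positivity)]
  have hgle : ∫ ω, g ω ∂μ ≤ Real.sqrt cst := by
    have hpoint : ∀ ω, g ω ≤ (f ω + cst) / (2 * Real.sqrt cst) := by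
      intro ω
      rw [le_div_iff₀ (by positivity)]
      have h1 : f ω = (Real.sqrt (f ω))^2 := (Real.sq_sqrt (hfnonneg ω)).symm
      have h2 : cst = (Real.sqrt cst)^2 := (Real.sq_sqrt hcstpos.le).symm
      have h3 : g ω = Real.sqrt (f ω) := rfl
      nlinarith [sq_nonneg (Real.sqrt (f ω) - Real.sqrt cst)]
    calc ∫ ω, g ω ∂μ ≤ ∫ ω, (f ω + cst) / (2 * Real.sqrt cst) ∂μ := by
          apply integral_mono hgint ((hfint.add (integrable_const cst)).div_const _)
          exact hpoint
      _ = ((∫ ω, f ω ∂μ) + cst) / (2 * Real.sqrt cst) := by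
          rw [integral_div, integral_add hfint (integrable_const cst), integral_const]
          simp [measure_univ]
      _ ≤ (cst + cst) / (2 * Real.sqrt cst) := by
          gcongr
      _ = Real.sqrt cst := by
          rw [show cst + cst = 2 * cst by ring]
          rw [mul_div_mul_left _ _ (two_ne_zero)]
          exact Real.div_sqrt
  have hsqrtcst : Real.sqrt cst = 2 * p / Real.sqrt L := by
    rw [hcst, Real.sqrt_div (by positivity), show (4*(p:ℝ)^2) = (2*(p:ℝ))^2 by ring,
      Real.sqrt_sq (by positivity)]
  have hmain : ∫ ω, dF (AhatL ω) A₀ ∂μ ≤ K + 2 * Real.sqrt d₀ * (2 * p / Real.sqrt L) := by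
    have hRHSint : Integrable (fun ω => K + 2 * Real.sqrt d₀ * g ω) μ :=
      (integrable_const K).add (hgint.const_mul _)
    calc ∫ ω, dF (AhatL ω) A₀ ∂μ ≤ ∫ ω, (K + 2 * Real.sqrt d₀ * g ω) ∂μ := by
          apply integral_mono_of_nonneg
            (Filter.Eventually.of_forall (fun ω => Real.sqrt_nonneg _)) hRHSint
          exact Filter.Eventually.of_forall hdk
      _ = K + 2 * Real.sqrt d₀ * ∫ ω, g ω ∂μ := by
          rw [integral_add (integrable_const K) (hgint.const_mul _), integral_const,
            integral_const_mul]
          simp [measure_univ]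
      _ ≤ K + 2 * Real.sqrt d₀ * (2 * p / Real.sqrt L) := by
          have h4 : (0:ℝ) ≤ 2 * Real.sqrt d₀ := by positivity
          have h5 := mul_le_mul_of_nonneg_left (le_trans hgle (le_of_eq hsqrtcst)) h4
          linarith
  have h2pi : (2:ℝ) ≤ Real.sqrt (2 * Real.pi) := by
    have h4 : (4:ℝ) ≤ 2 * Real.pi := by nlinarith [Real.two_le_pi]
    calc (2:ℝ) = Real.sqrt 4 := by
          rw [show (4:ℝ) = 2^2 by norm_num, Real.sqrt_sq (by norm_num)]
      _ ≤ Real.sqrt (2 * Real.pi) := Real.sqrt_le_sqrt h4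
  refine le_trans hmain ?_
  rw [hK, hP0]
  apply add_le_add le_rfl
  have ht : (0:ℝ) ≤ (Real.sqrt L)⁻¹ := by positivity
  have hpn : (0:ℝ) ≤ (p:ℝ) := by positivity
  rw [div_eq_mul_inv, div_eq_mul_inv]
  nlinarith [mul_nonneg (sub_nonneg.mpr h2pi)
    (mul_nonneg (mul_nonneg (Real.sqrt_nonneg (d₀:ℝ)) hpn) ht),
    Real.sqrt_nonneg (d₀:ℝ), mul_nonneg (mul_nonneg (Real.sqrt_nonneg (d₀:ℝ)) hpn) ht]
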